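/- arXiv:2410.23940 — 3 statements merged into one kernel-verified Lean document; each statement's English description precedes it below -/
import Mathlib

section
/- For any Hermitian matrix M and unit vectors z, z' in ℂ^d, |⟨z|M|z⟩ − ⟨z'|M|z'⟩| ≤ 2‖M‖·√(1 − |⟨z|z'⟩|²), where ‖M‖ is the operator norm. -/
theorem stmt1 {d : ℕ}
    (M : EuclideanSpace ℂ (Fin d) →L[ℂ] EuclideanSpace ℂ (Fin d))
    (hM : IsSelfAdjoint M)
    (z z' : EuclideanSpace ℂ (Fin d)) (hz : ‖z‖ = 1) (hz' : ‖z'‖ = 1) :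
    |(inner ℂ z (M z) : ℂ).re - (inner ℂ z' (M z') : ℂ).re| ≤
      2 * ‖M‖ * Real.sqrt (1 - ‖(inner ℂ z z' : ℂ)‖ ^ 2) := by
  set a : ℂ := inner ℂ z z' with ha
  set c : ℂ := if a = 0 then 1 else (starRingEnd ℂ) a / ‖a‖ with hc
  have hc1 : ‖c‖ = 1 := by
    rw [hc]; split_ifs with h
    · simp
    · rw [norm_div]
      simp only [RCLike.norm_conj, Complex.norm_real, Real.norm_eq_abs, abs_norm]
      exact div_self (norm_ne_zero_iff.mpr h)
  have hca : c * a = (‖a‖ : ℂ) := by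
    rw [hc]; split_ifs with h
    · simp [h]
    · have h' : (‖a‖ : ℂ) ≠ 0 := by simpa using norm_ne_zero_iff.mpr h
      rw [div_mul_eq_mul_div, Complex.conj_mul', sq, mul_div_assoc,
        div_self h', mul_one]
  set w : EuclideanSpace ℂ (Fin d) := c • z' with hwdef
  have hw : ‖w‖ = 1 := by rw [hwdef, norm_smul, hc1, hz', one_mul]
  have hzw : (inner ℂ z w : ℂ) = (‖a‖ : ℂ) := by
    rw [hwdef, inner_smul_right, ← ha, hca]
  have hcc : (starRingEnd ℂ) c * c = 1 := by
    rw [Complex.conj_mul']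
    norm_num [hc1]
  have hMw : (inner ℂ w (M w) : ℂ) = inner ℂ z' (M z') := by
    rw [hwdef, map_smul, inner_smul_left, inner_smul_right, ← mul_assoc, hcc, one_mul]
  set t : ℝ := ‖a‖ with htdef
  have ht0 : 0 ≤ t := norm_nonneg a
  have ht1 : t ≤ 1 := by
    have := norm_inner_le_norm (𝕜 := ℂ) z z'
    rwa [hz, hz', one_mul, ← ha] at this
  have hsym : ∀ x y : EuclideanSpace ℂ (Fin d), (inner ℂ (M x) y : ℂ) = inner ℂ x (M y) :=
    (ContinuousLinearMap.isSelfAdjoint_iff_isSymmetric.mp hM)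
  -- key identity
  have hkey : (inner ℂ z (M z) : ℂ).re - (inner ℂ w (M w) : ℂ).re
      = (inner ℂ (z - w) (M (z + w)) : ℂ).re := by
    rw [map_add, inner_sub_left, inner_add_right, inner_add_right]
    have h1 : (inner ℂ w (M z) : ℂ) = (starRingEnd ℂ) (inner ℂ z (M w) : ℂ) := by
      rw [← hsym w z]
      exact (inner_conj_symm _ _).symm
    rw [h1]
    simp [Complex.sub_re, Complex.add_re, Complex.conj_re]
    have h2 : (inner ℂ (M w) z : ℂ).re = (inner ℂ z (M w) : ℂ).re := by
      rw [← inner_conj_symm, Complex.conj_re]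
    rw [h2]
    ring
  have h0 : |(inner ℂ (z - w) (M (z + w)) : ℂ).re| ≤ ‖(inner ℂ (z - w) (M (z + w)) : ℂ)‖ := by
    exact Complex.abs_re_le_norm _
  have hbound : |(inner ℂ (z - w) (M (z + w)) : ℂ).re| ≤ ‖z - w‖ * (‖M‖ * ‖z + w‖) :=
    le_trans h0 (le_trans (norm_inner_le_norm _ _)
        (mul_le_mul_of_nonneg_left (M.le_opNorm _) (norm_nonneg _)))
  have hns : ‖z - w‖ ^ 2 = 2 - 2 * t := by
    rw [@norm_sub_sq ℂ, hz, hw, hzw]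
    simp
    ring
  have hna : ‖z + w‖ ^ 2 = 2 + 2 * t := by
    rw [@norm_add_sq ℂ, hz, hw, hzw]
    simp
    ring
  have hprod : ‖z - w‖ * ‖z + w‖ = 2 * Real.sqrt (1 - t ^ 2) := by
    have e1 : ‖z - w‖ = Real.sqrt (2 - 2 * t) := by
      rw [← hns, Real.sqrt_sq (norm_nonneg _)]
    have e2 : ‖z + w‖ = Real.sqrt (2 + 2 * t) := by
      rw [← hna, Real.sqrt_sq (norm_nonneg _)]
    rw [e1, e2, ← Real.sqrt_mul (by nlinarith)]
    have : (2 - 2 * t) * (2 + 2 * t) = 4 * (1 - t ^ 2) := by ring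
    rw [this, Real.sqrt_mul (by norm_num), show Real.sqrt 4 = 2 by
      rw [show (4:ℝ) = 2^2 by norm_num, Real.sqrt_sq (by norm_num)]]
  calc |(inner ℂ z (M z) : ℂ).re - (inner ℂ z' (M z') : ℂ).re|
      = |(inner ℂ (z - w) (M (z + w)) : ℂ).re| := by rw [← hMw, hkey]
    _ ≤ ‖z - w‖ * (‖M‖ * ‖z + w‖) := hbound
    _ = ‖M‖ * (‖z - w‖ * ‖z + w‖) := by ring
    _ = ‖M‖ * (2 * Real.sqrt (1 - t ^ 2)) := by rw [hprod]
    _ = 2 * ‖M‖ * Real.sqrt (1 - ‖(inner ℂ z z' : ℂ)‖ ^ 2) := by rw [← ha, ← htdef]; ring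
end

section
/- For any orthogonal projection P on ℂ^d and unit vectors z, z', |⟨z|P|z⟩ − ⟨z'|P|z'⟩| ≤ √(1 − |⟨z|z'⟩|²). -/
theorem aux {d : ℕ}
    (P : EuclideanSpace ℂ (Fin d) →L[ℂ] EuclideanSpace ℂ (Fin d))
    (hP : IsSelfAdjoint P) (hP2 : P ∘L P = P)
    (z w : EuclideanSpace ℂ (Fin d)) (hz : ‖z‖ = 1) (hw : ‖w‖ = 1)
    (t : ℝ) (ht : (inner ℂ z w : ℂ) = t) :
    |(inner ℂ z (P z) : ℂ).re - (inner ℂ w (P w) : ℂ).re| ≤ Real.sqrt (1 - t ^ 2) := by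
  have hsym : ∀ x y : EuclideanSpace ℂ (Fin d), (inner ℂ (P x) y : ℂ) = inner ℂ x (P y) :=
    (ContinuousLinearMap.isSelfAdjoint_iff_isSymmetric.mp hP)
  have hidem : ∀ x, P (P x) = P x := fun x => congrFun (congrArg DFunLike.coe hP2) x
  set Q : EuclideanSpace ℂ (Fin d) →L[ℂ] EuclideanSpace ℂ (Fin d) := 1 - P with hQ
  have hsymQ : ∀ x y : EuclideanSpace ℂ (Fin d), (inner ℂ (Q x) y : ℂ) = inner ℂ x (Q y) := by
    intro x y; simp [hQ, inner_sub_left, inner_sub_right, hsym]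
  have hidemQ : ∀ x, Q (Q x) = Q x := by
    intro x; simp [hQ, map_sub, hidem]
  have hPQ : ∀ x, P x + Q x = x := by intro x; simp [hQ]
  set a := z + w with ha
  set b := z - w with hb
  have hwz : (inner ℂ w z : ℂ) = (t : ℂ) := by
    rw [← inner_conj_symm, ht]; simp
  -- generic: inner x (R x) for selfadjoint idempotent R has re ‖R x‖^2
  have key : ∀ (R : EuclideanSpace ℂ (Fin d) →L[ℂ] EuclideanSpace ℂ (Fin d)),
      (∀ x y, (inner ℂ (R x) y : ℂ) = inner ℂ x (R y)) → (∀ x, R (R x) = R x) →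
      ∀ x y : EuclideanSpace ℂ (Fin d), (inner ℂ x (R y) : ℂ) = inner ℂ (R x) (R y) := by
    intro R hs hi x y
    rw [hs x (R y), hi y]
  have normsq : ∀ x : EuclideanSpace ℂ (Fin d), (inner ℂ x x : ℂ).re = ‖x‖ ^ 2 := by
    intro x; exact inner_self_eq_norm_sq (𝕜 := ℂ) x
  set p := (inner ℂ z (P z) : ℂ).re with hp
  set q := (inner ℂ w (P w) : ℂ).re with hq
  have hpz : p = ‖P z‖ ^ 2 := by rw [hp, key P hsym hidem, normsq]
  have hqw : q = ‖P w‖ ^ 2 := by rw [hq, key P hsym hidem, normsq]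
  -- cross term
  set x := (inner ℂ z (P w) : ℂ) with hx
  have hcross : (inner ℂ w (P z) : ℂ) = starRingEnd ℂ x := by
    calc (inner ℂ w (P z) : ℂ) = starRingEnd ℂ (inner ℂ (P z) w) := (inner_conj_symm _ _).symm
      _ = starRingEnd ℂ (inner ℂ z (P w)) := by rw [hsym]
      _ = starRingEnd ℂ x := by rw [hx]
  have h1re : (inner ℂ a (P b) : ℂ).re = p - q := by
    rw [ha, hb, map_sub, inner_add_left, inner_sub_right, inner_sub_right, hcross]
    simp [hp, hq, hx, Complex.sub_re, Complex.add_re, Complex.conj_re]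
    have hre := inner_re_symm (𝕜 := ℂ) (P w) z; simp only [RCLike.re_to_complex] at hre; linarith
  have h2re : (inner ℂ a (Q b) : ℂ).re = q - p := by
    have e1 : ∀ u v : EuclideanSpace ℂ (Fin d), (inner ℂ u (Q v) : ℂ) = inner ℂ u v - inner ℂ u (P v) := by
      intro u v; simp [hQ, inner_sub_right]
    rw [ha, hb, map_sub, inner_add_left, inner_sub_right, inner_sub_right,
      e1, e1, e1, e1, hcross, ← hx]
    have hzz : (inner ℂ z z : ℂ) = 1 := by
      rw [inner_self_eq_norm_sq_to_K, hz]; norm_num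
    have hww : (inner ℂ w w : ℂ) = 1 := by
      rw [inner_self_eq_norm_sq_to_K, hw]; norm_num
    rw [hzz, hww, ht, hwz]
    simp [hp, hq, hx, Complex.sub_re, Complex.add_re, Complex.conj_re, Complex.ofReal_re,
      Complex.one_re]
    have hre := inner_re_symm (𝕜 := ℂ) (P w) z; simp only [RCLike.re_to_complex] at hre; linarith
  have hCS1 : |p - q| ≤ ‖P a‖ * ‖P b‖ := by
    calc |p - q| = |(inner ℂ a (P b) : ℂ).re| := by rw [h1re]
      _ ≤ ‖(inner ℂ a (P b) : ℂ)‖ := Complex.abs_re_le_norm _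
      _ = ‖(inner ℂ (P a) (P b) : ℂ)‖ := by rw [key P hsym hidem]
      _ ≤ ‖P a‖ * ‖P b‖ := norm_inner_le_norm _ _
  have hCS2 : |p - q| ≤ ‖Q a‖ * ‖Q b‖ := by
    calc |p - q| = |(inner ℂ a (Q b) : ℂ).re| := by rw [h2re, abs_sub_comm]
      _ ≤ ‖(inner ℂ a (Q b) : ℂ)‖ := Complex.abs_re_le_norm _
      _ = ‖(inner ℂ (Q a) (Q b) : ℂ)‖ := by rw [key Q hsymQ hidemQ]
      _ ≤ ‖Q a‖ * ‖Q b‖ := norm_inner_le_norm _ _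
  have hsum : ∀ x : EuclideanSpace ℂ (Fin d), ‖P x‖ ^ 2 + ‖Q x‖ ^ 2 = ‖x‖ ^ 2 := by
    intro v
    have : (inner ℂ v v : ℂ) = inner ℂ (P v) (P v) + inner ℂ (Q v) (Q v) := by
      rw [← key P hsym hidem, ← key Q hsymQ hidemQ, ← inner_add_right, hPQ]
    have := congrArg Complex.re this
    rwa [Complex.add_re, normsq, normsq, normsq, eq_comm] at this
  have hna : ‖a‖ ^ 2 = 2 + 2 * t := by
    have : (inner ℂ a a : ℂ) = 2 + 2 * (t : ℂ) := by
      rw [ha, inner_add_left, inner_add_right, inner_add_right, ht, hwz,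
        inner_self_eq_norm_sq_to_K, inner_self_eq_norm_sq_to_K, hz, hw]
      push_cast; ring
    have := congrArg Complex.re this
    rw [normsq] at this
    simpa using this
  have hnb : ‖b‖ ^ 2 = 2 - 2 * t := by
    have : (inner ℂ b b : ℂ) = 2 - 2 * (t : ℂ) := by
      rw [hb, inner_sub_left, inner_sub_right, inner_sub_right, ht, hwz,
        inner_self_eq_norm_sq_to_K, inner_self_eq_norm_sq_to_K, hz, hw]
      push_cast; ring
    have := congrArg Complex.re this
    rw [normsq] at this
    simpa using this
  have hsa := hsum a
  have hsb := hsum b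
  clear_value Q a b p q x
  have hA : ‖P a‖ * ‖Q a‖ ≤ 1 + t := by
    nlinarith [sq_nonneg (‖P a‖ - ‖Q a‖)]
  have hB : ‖P b‖ * ‖Q b‖ ≤ 1 - t := by
    nlinarith [sq_nonneg (‖P b‖ - ‖Q b‖)]
  have hprod : |p - q| * |p - q| ≤ (‖P a‖ * ‖P b‖) * (‖Q a‖ * ‖Q b‖) :=
    mul_le_mul hCS1 hCS2 (abs_nonneg _) (mul_nonneg (norm_nonneg _) (norm_nonneg _))
  have hBnn : (0:ℝ) ≤ ‖P b‖ * ‖Q b‖ := mul_nonneg (norm_nonneg _) (norm_nonneg _)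
  have hAnn : (0:ℝ) ≤ ‖P a‖ * ‖Q a‖ := mul_nonneg (norm_nonneg _) (norm_nonneg _)
  have hab : (‖P a‖ * ‖P b‖) * (‖Q a‖ * ‖Q b‖) ≤ (1 + t) * (1 - t) := by
    calc (‖P a‖ * ‖P b‖) * (‖Q a‖ * ‖Q b‖) = (‖P a‖ * ‖Q a‖) * (‖P b‖ * ‖Q b‖) := by ring
      _ ≤ (1 + t) * (1 - t) := mul_le_mul hA hB hBnn (le_trans hAnn hA)
  apply Real.abs_le_sqrt
  calc (p - q) ^ 2 = |p - q| * |p - q| := by rw [← sq_abs]; ring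
    _ ≤ (‖P a‖ * ‖P b‖) * (‖Q a‖ * ‖Q b‖) := hprod
    _ ≤ (1 + t) * (1 - t) := hab
    _ = 1 - t ^ 2 := by ring

theorem stmt2 {d : ℕ}
    (P : EuclideanSpace ℂ (Fin d) →L[ℂ] EuclideanSpace ℂ (Fin d))
    (hP : IsSelfAdjoint P) (hP2 : P ∘L P = P)
    (z z' : EuclideanSpace ℂ (Fin d)) (hz : ‖z‖ = 1) (hz' : ‖z'‖ = 1) :
    |(inner ℂ z (P z) : ℂ).re - (inner ℂ z' (P z') : ℂ).re| ≤
      Real.sqrt (1 - ‖(inner ℂ z z' : ℂ)‖ ^ 2) := by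
  set c : ℂ := inner ℂ z z' with hc
  set u : ℂ := if c = 0 then 1 else (‖c‖ : ℂ) / c with hu
  have hun : ‖u‖ = 1 := by
    rw [hu]
    split_ifs with h
    · simp
    · rw [norm_div]
      simp [h]
  have huc : u * c = (‖c‖ : ℂ) := by
    rw [hu]
    split_ifs with h
    · simp [h]
    · field_simp
  set w : EuclideanSpace ℂ (Fin d) := u • z' with hw
  have hwn : ‖w‖ = 1 := by rw [hw, norm_smul, hun, hz']; ring
  have hzw : (inner ℂ z w : ℂ) = ((‖c‖ : ℝ) : ℂ) := by
    rw [hw, inner_smul_right, ← hc, huc]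
  have hconj : (starRingEnd ℂ) u * u = 1 := by
    rw [mul_comm, Complex.mul_conj]
    norm_cast
    simp [Complex.normSq_eq_norm_sq, hun]
  have hww : (inner ℂ w (P w) : ℂ) = inner ℂ z' (P z') := by
    rw [hw, map_smul, inner_smul_right, inner_smul_left, ← mul_assoc, mul_comm u, hconj, one_mul]
  rw [← hww]
  exact aux P hP hP2 z w hz hwn ‖c‖ hzw
end

section
/- Let M be an orthogonal projection on ℂ^d and let A be a Hermitian traceless operator of the form λ(|ξ₀⟩⟨ξ₀| − |ξ₁⟩⟨ξ₁|) with λ ≥ 0 and ξ₀ ⊥ ξ₁ unit vectors. Then |Tr(M·A)| ≤ λ = ½‖A‖_Tr. -/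
open Matrix
open scoped ComplexOrder

/-- The trace norm of a matrix: `Tr √(Aᴴ A)`, the sum of singular values. -/
noncomputable def traceNorm {d : ℕ} (A : Matrix (Fin d) (Fin d) ℂ) : ℝ :=
  (((Matrix.posSemidef_conjTranspose_mul_self A).1.eigenvectorUnitary.1 *
      Matrix.diagonal (fun i => ((Real.sqrt ((Matrix.posSemidef_conjTranspose_mul_self A).1.eigenvalues i) : ℝ) : ℂ)) *
      (star (Matrix.posSemidef_conjTranspose_mul_self A).1.eigenvectorUnitary : Matrix (Fin d) (Fin d) ℂ)).trace).re

/-- The rank-one projector `|z⟩⟨z|`. -/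
noncomputable def outer {d : ℕ} (z : Fin d → ℂ) : Matrix (Fin d) (Fin d) ℂ :=
  Matrix.vecMulVec z (star z)

lemma vecMulVec_mul_vecMulVec' {d : ℕ} (z w u v : Fin d → ℂ) :
    vecMulVec z w * vecMulVec u v = (dotProduct w u) • vecMulVec z v := by
  ext i j
  simp [vecMulVec, Matrix.mul_apply, dotProduct, Finset.sum_mul, Finset.mul_sum]
  exact Finset.sum_congr rfl fun k _ => by ring

lemma trace_mul_vecMulVec' {d : ℕ} (M : Matrix (Fin d) (Fin d) ℂ) (z w : Fin d → ℂ) :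
    (M * vecMulVec z w).trace = dotProduct w (M.mulVec z) := by
  simp [Matrix.trace, Matrix.diag, Matrix.mul_apply, vecMulVec, dotProduct,
    Matrix.mulVec, Finset.mul_sum]
  exact Finset.sum_congr rfl fun i _ => Finset.sum_congr rfl fun k _ => by ring

lemma trace_vecMulVec' {d : ℕ} (z w : Fin d → ℂ) :
    (vecMulVec z w).trace = dotProduct z w := by
  simp [Matrix.trace, Matrix.diag, vecMulVec, dotProduct]

lemma outer_posSemidef {d : ℕ} (z : Fin d → ℂ) : (outer z).PosSemidef := by
  exact posSemidef_vecMulVec_self_star z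

theorem stmt11 {d : ℕ} (M : Matrix (Fin d) (Fin d) ℂ)
    (hM : M.IsHermitian) (hM2 : M * M = M)
    (ξ₀ ξ₁ : Fin d → ℂ) (l : ℝ) (hl : 0 ≤ l)
    (hξ₀ : dotProduct (star ξ₀) ξ₀ = 1)
    (hξ₁ : dotProduct (star ξ₁) ξ₁ = 1)
    (horth : dotProduct (star ξ₀) ξ₁ = 0)
    (A : Matrix (Fin d) (Fin d) ℂ)
    (hA : A = (l : ℂ) • (outer ξ₀ - outer ξ₁)) :
    ‖(M * A).trace‖ ≤ l ∧ l = traceNorm A / 2 := by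
  have horth' : dotProduct (star ξ₁) ξ₀ = 0 := by
    have : dotProduct (star ξ₁) ξ₀ = star (dotProduct (star ξ₀) ξ₁) := by
      simp [dotProduct, star_sum, mul_comm]
    rw [this, horth, star_zero]
  -- M and 1 - M are positive semidefinite
  have hMps : M.PosSemidef := by
    have h : M = Mᴴ * M := by rw [hM, hM2]
    rw [h]; exact posSemidef_conjTranspose_mul_self _
  have hQps : (1 - M).PosSemidef := by
    have h : (1 - M) = (1 - M)ᴴ * (1 - M) := by
      rw [conjTranspose_sub, conjTranspose_one, hM]
      rw [sub_mul, mul_sub, mul_sub, hM2]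
      noncomm_ring
    rw [h]; exact posSemidef_conjTranspose_mul_self _
  -- the diagonal expectation values
  set c₀ : ℂ := dotProduct (star ξ₀) (M.mulVec ξ₀) with hc₀
  set c₁ : ℂ := dotProduct (star ξ₁) (M.mulVec ξ₁) with hc₁
  have hbound : ∀ (ξ : Fin d → ℂ), dotProduct (star ξ) ξ = 1 →
      (dotProduct (star ξ) (M.mulVec ξ)).im = 0 ∧
      0 ≤ (dotProduct (star ξ) (M.mulVec ξ)).re ∧
      (dotProduct (star ξ) (M.mulVec ξ)).re ≤ 1 := by
    intro ξ hξ
    have h1 := hMps.dotProduct_mulVec_nonneg ξ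
    have h2 := hQps.dotProduct_mulVec_nonneg ξ
    rw [Matrix.sub_mulVec, Matrix.one_mulVec, dotProduct_sub, hξ] at h2
    rw [Complex.nonneg_iff] at h1 h2
    obtain ⟨h1r, h1i⟩ := h1
    obtain ⟨h2r, h2i⟩ := h2
    refine ⟨h1i.symm, h1r, ?_⟩
    simpa using h2r
  obtain ⟨hi₀, hr₀, hr₀'⟩ := hbound ξ₀ hξ₀
  obtain ⟨hi₁, hr₁, hr₁'⟩ := hbound ξ₁ hξ₁
  -- trace of M * A
  have htr : (M * A).trace = (l : ℂ) * (c₀ - c₁) := by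
    rw [hA, Matrix.mul_smul, Matrix.trace_smul, mul_sub, Matrix.trace_sub,
      outer, outer, trace_mul_vecMulVec', trace_mul_vecMulVec', smul_eq_mul]
  constructor
  · rw [htr]
    have hc : c₀ - c₁ = ((c₀.re - c₁.re : ℝ) : ℂ) := by
      apply Complex.ext <;> simp [hc₀, hc₁, hi₀, hi₁]
    rw [hc]
    rw [← Complex.ofReal_mul]
    rw [Complex.norm_real, Real.norm_eq_abs, abs_mul, abs_of_nonneg hl]
    calc l * |c₀.re - c₁.re| ≤ l * 1 := by
          apply mul_le_mul_of_nonneg_left _ hl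
          rw [abs_sub_le_iff]
          constructor <;> linarith
      _ = l := mul_one l
  · -- trace norm computation
    set P₀ := outer ξ₀
    set P₁ := outer ξ₁
    have hP00 : P₀ * P₀ = P₀ := by
      rw [show P₀ = vecMulVec ξ₀ (star ξ₀) from rfl, vecMulVec_mul_vecMulVec', hξ₀, one_smul]
    have hP11 : P₁ * P₁ = P₁ := by
      rw [show P₁ = vecMulVec ξ₁ (star ξ₁) from rfl, vecMulVec_mul_vecMulVec', hξ₁, one_smul]
    have hP01 : P₀ * P₁ = 0 := by
      rw [show P₀ = vecMulVec ξ₀ (star ξ₀) from rfl,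
        show P₁ = vecMulVec ξ₁ (star ξ₁) from rfl, vecMulVec_mul_vecMulVec', horth, zero_smul]
    have hP10 : P₁ * P₀ = 0 := by
      rw [show P₀ = vecMulVec ξ₀ (star ξ₀) from rfl,
        show P₁ = vecMulVec ξ₁ (star ξ₁) from rfl, vecMulVec_mul_vecMulVec', horth', zero_smul]
    have hsum : (P₀ + P₁) * (P₀ + P₁) = P₀ + P₁ := by
      rw [add_mul, mul_add, mul_add, hP00, hP11, hP01, hP10, add_zero, zero_add]
    have hdiff : (P₀ - P₁) * (P₀ - P₁) = P₀ + P₁ := by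
      rw [sub_mul, mul_sub, mul_sub, hP00, hP11, hP01, hP10]
      abel
    have hAH : Aᴴ = A := by
      rw [hA, conjTranspose_smul, conjTranspose_sub,
        (outer_posSemidef ξ₀).1, (outer_posSemidef ξ₁).1]
      congr 1
      simp
    set B : Matrix (Fin d) (Fin d) ℂ := (l : ℂ) • (P₀ + P₁) with hB
    have hBps : B.PosSemidef := by
      rw [posSemidef_iff_dotProduct_mulVec]
      constructor
      · have hherm : (P₀ + P₁).IsHermitian :=
          (outer_posSemidef ξ₀).1.add (outer_posSemidef ξ₁).1
        rw [hB, Matrix.IsHermitian, conjTranspose_smul, hherm]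
        congr 1
        simp
      · intro x
        rw [hB, Matrix.smul_mulVec, dotProduct_smul, smul_eq_mul]
        exact mul_nonneg (by exact_mod_cast Complex.zero_le_real.mpr hl)
          (((outer_posSemidef ξ₀).add (outer_posSemidef ξ₁)).dotProduct_mulVec_nonneg x)
    have hB2 : B ^ 2 = Aᴴ * A := by
      rw [hAH, hA, hB, pow_two, Matrix.smul_mul, Matrix.mul_smul, hsum,
        Matrix.smul_mul, Matrix.mul_smul, hdiff]
    have hBsqrt : B = (Matrix.posSemidef_conjTranspose_mul_self A).1.eigenvectorUnitary.1 *
        Matrix.diagonal (fun i => ((Real.sqrt ((Matrix.posSemidef_conjTranspose_mul_self A).1.eigenvalues i) : ℝ) : ℂ)) *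
        (star (Matrix.posSemidef_conjTranspose_mul_self A).1.eigenvectorUnitary : Matrix (Fin d) (Fin d) ℂ) := by
      have hH := (Matrix.posSemidef_conjTranspose_mul_self A).1
      have e : (Matrix.posSemidef_conjTranspose_mul_self A).1.eigenvectorUnitary.1 *
          Matrix.diagonal (fun i => ((Real.sqrt ((Matrix.posSemidef_conjTranspose_mul_self A).1.eigenvalues i) : ℝ) : ℂ)) *
          (star (Matrix.posSemidef_conjTranspose_mul_self A).1.eigenvectorUnitary : Matrix (Fin d) (Fin d) ℂ)
          = hH.cfc Real.sqrt := by
        simp [IsHermitian.cfc, Function.comp_def, Unitary.conjStarAlgAut_apply]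
      have hBsa : IsSelfAdjoint B := hBps.1.isSelfAdjoint
      have hspec : ∀ x ∈ spectrum ℝ B, 0 ≤ x := by
        intro x hx
        obtain ⟨i, rfl⟩ := hBps.1.spectrum_real_eq_range_eigenvalues ▸ hx
        exact hBps.eigenvalues_nonneg i
      rw [e, ← hH.cfc_eq, ← hB2, ← cfc_pow_id (R := ℝ) B 2 hBsa, ← cfc_comp' Real.sqrt (fun x => x ^ 2) B]
      rw [cfc_congr (f := fun x => Real.sqrt (x ^ 2)) (g := id) (a := B)
        (fun x hx => by simp [Real.sqrt_sq (hspec x hx)])]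
      exact (cfc_id ℝ B).symm
    have htrB : B.trace = (2 * l : ℝ) := by
      rw [hB, Matrix.trace_smul, Matrix.trace_add,
        show P₀ = vecMulVec ξ₀ (star ξ₀) from rfl,
        show P₁ = vecMulVec ξ₁ (star ξ₁) from rfl,
        trace_vecMulVec', trace_vecMulVec']
      have e0 : dotProduct ξ₀ (star ξ₀) = 1 := by
        rw [dotProduct_comm]; exact hξ₀
      have e1 : dotProduct ξ₁ (star ξ₁) = 1 := by
        rw [dotProduct_comm]; exact hξ₁
      rw [e0, e1, smul_eq_mul]
      push_cast
      ring
    rw [traceNorm, ← hBsqrt, htrB, Complex.ofReal_re]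
    ring
end
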